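/- arXiv:0901.0185 — 3 statements merged into one kernel-verified Lean document; each statement's English description precedes it below -/
import Mathlib

section
/- Let $A$ be a self-adjoint nonnegative operator on a real Hilbert space $H$, let $m:[0,+\infty)\to(0,+\infty)$ be $C^1$ with $\mu_1:=\inf m>0$, and let $b:[0,+\infty)\to(0,+\infty)$ be continuous with $\int_0^{+\infty}b(s)\,ds<+\infty$. Let $(u_0,u_1)\in D(A)\times D(A^{1/2})$ with $|u_1|^2+|A^{1/2}u_0|^2>0$, and suppose for some $\varepsilon>0$ the equation $\varepsilon u''+b(t)u'+m(|A^{1/2}u|^2)Au=0$ with data $(u_0,u_1)$ has a global $C^2$ solution $u_\varepsilon$. Then $\liminf_{t\to+\infty}\left(|u_\varepsilon'(t)|^2+|A^{1/2}u_\varepsilon(t)|^2\right)>0$. -/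
open scoped RealInnerProductSpace

/-- Supercritical case: if the damping coefficient `b` is integrable, then a global
solution of `ε u'' + b(t) u' + m(|A^{1/2}u|²) A u = 0` with nontrivial data does not
decay: `liminf_{t→∞} (|u'(t)|² + |A^{1/2}u(t)|²) > 0`. -/
theorem stmt_5 {H : Type*} [NormedAddCommGroup H] [InnerProductSpace ℝ H]
    (A B : H →L[ℝ] H)
    (hB_sq : ∀ x, B (B x) = A x)
    (hA_sa : ∀ x y, ⟪A x, y⟫ = ⟪x, A y⟫)
    (hB_sa : ∀ x y, ⟪B x, y⟫ = ⟪x, B y⟫)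
    (hA_nonneg : ∀ x, 0 ≤ ⟪A x, x⟫)
    (m : ℝ → ℝ) (hm : ContDiff ℝ 1 m)
    (μ₁ : ℝ) (hμ₁ : 0 < μ₁) (hm_lb : ∀ σ, 0 ≤ σ → μ₁ ≤ m σ)
    (b : ℝ → ℝ) (hb_cont : ContinuousOn b (Set.Ici 0))
    (hb_pos : ∀ t, 0 ≤ t → 0 < b t)
    (hb_int : MeasureTheory.IntegrableOn b (Set.Ici 0))
    (u₀ u₁ : H) (hdata : 0 < ‖u₁‖ ^ 2 + ‖B u₀‖ ^ 2)
    (ε : ℝ) (hε : 0 < ε)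
    (u u' u'' : ℝ → H)
    (hu0 : u 0 = u₀) (hu1 : u' 0 = u₁)
    (hu : ∀ t, 0 ≤ t → HasDerivWithinAt u (u' t) (Set.Ici 0) t)
    (hu' : ∀ t, 0 ≤ t → HasDerivWithinAt u' (u'' t) (Set.Ici 0) t)
    (hu''_cont : ContinuousOn u'' (Set.Ici 0))
    (heq : ∀ t, 0 ≤ t →
      ε • u'' t + b t • u' t + m (‖B (u t)‖ ^ 2) • A (u t) = 0) :
    0 < Filter.liminf (fun t => ‖u' t‖ ^ 2 + ‖B (u t)‖ ^ 2) Filter.atTop := by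
  have hmc : Continuous m := hm.continuous
  -- abbreviations
  set E : ℝ → ℝ := fun t => ‖u' t‖ ^ 2 with hE_def
  set F : ℝ → ℝ := fun t => ‖B (u t)‖ ^ 2 with hF_def
  set M : ℝ → ℝ := fun σ => ∫ x in (0:ℝ)..σ, m x with hM_def
  set Hf : ℝ → ℝ := fun t => ε * E t + M (F t) with hHf_def
  have hE_nonneg : ∀ t, 0 ≤ E t := fun t => sq_nonneg _
  have hF_nonneg : ∀ t, 0 ≤ F t := fun t => sq_nonneg _
  -- derivative of M
  have hMd : ∀ σ : ℝ, HasDerivAt M (m σ) σ := fun σ =>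
    (intervalIntegral.integral_hasStrictDerivAt_right (hmc.intervalIntegrable 0 σ)
      (hmc.stronglyMeasurableAtFilter _ _) hmc.continuousAt).hasDerivAt
  -- lower bound for M
  have hM_lb : ∀ σ : ℝ, 0 ≤ σ → μ₁ * σ ≤ M σ := by
    intro σ hσ
    have h := intervalIntegral.integral_mono_on (μ := MeasureTheory.volume) hσ ((continuous_const : Continuous fun _ : ℝ => μ₁).intervalIntegrable 0 σ)
      (hmc.intervalIntegrable 0 σ) (fun x hx => hm_lb x hx.1)
    simpa [mul_comm] using h
  -- derivatives of E, F, Hf within Ici 0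
  have hEd : ∀ t, 0 ≤ t → HasDerivWithinAt E (2 * ⟪u' t, u'' t⟫) (Set.Ici 0) t :=
    fun t ht => (hu' t ht).norm_sq
  have hFd : ∀ t, 0 ≤ t →
      HasDerivWithinAt F (2 * ⟪B (u t), B (u' t)⟫) (Set.Ici 0) t := by
    intro t ht
    exact (B.hasFDerivAt.comp_hasDerivWithinAt t (hu t ht)).norm_sq
  have hHd : ∀ t, 0 ≤ t → HasDerivWithinAt Hf (-(2 * b t * E t)) (Set.Ici 0) t := by
    intro t ht
    have h1 : (⟪B (u t), B (u' t)⟫ : ℝ) = ⟪u' t, A (u t)⟫ := by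
      rw [hB_sa, hB_sq, ← hA_sa, real_inner_comm]
    have h3 : (⟪u' t, ε • u'' t + b t • u' t + m (‖B (u t)‖ ^ 2) • A (u t)⟫ : ℝ) = 0 := by
      rw [heq t ht, inner_zero_right]
    rw [inner_add_right, inner_add_right, real_inner_smul_right, real_inner_smul_right,
      real_inner_smul_right] at h3
    have h4 : (⟪u' t, u' t⟫ : ℝ) = E t := real_inner_self_eq_norm_sq _
    have key : ε * (2 * ⟪u' t, u'' t⟫) + m (F t) * (2 * ⟪B (u t), B (u' t)⟫)
        = -(2 * b t * E t) := by
      rw [h1]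
      have : (F t : ℝ) = ‖B (u t)‖ ^ 2 := rfl
      rw [this]
      linear_combination 2 * h3 - 2 * b t * h4
    have hd := ((hEd t ht).const_mul ε).add
      ((hMd (F t)).comp_hasDerivWithinAt t (hFd t ht))
    rw [← key]
    exact hd
  -- continuity of Hf on Ici 0
  have hHf_cont : ContinuousOn Hf (Set.Ici 0) :=
    fun t ht => (hHd t ht).continuousWithinAt
  -- Hf is nonincreasing
  have hHf_anti : AntitoneOn Hf (Set.Ici 0) := by
    apply antitoneOn_of_hasDerivWithinAt_nonpos (convex_Ici 0) hHf_cont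
      (f' := fun t => -(2 * b t * E t))
    · intro x hx
      rw [interior_Ici] at hx
      exact ((hHd x hx.le).mono (by rw [interior_Ici]; exact Set.Ioi_subset_Ici_self))
    · intro x hx
      rw [interior_Ici] at hx
      have := hb_pos x hx.le
      nlinarith [hE_nonneg x]
  -- ε E ≤ Hf and 0 ≤ Hf
  have hHf_lbE : ∀ t, 0 ≤ t → ε * E t ≤ Hf t := by
    intro t ht
    have := hM_lb (F t) (hF_nonneg t)
    have := hF_nonneg t
    simp only [hHf_def]
    nlinarith [hM_lb (F t) (hF_nonneg t), mul_nonneg hμ₁.le (hF_nonneg t)]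
  have hHf_nonneg : ∀ t, 0 ≤ t → 0 ≤ Hf t := by
    intro t ht
    have h := hHf_lbE t ht
    nlinarith [mul_nonneg hε.le (hE_nonneg t)]
  -- the integral of b
  set bb : ℝ → ℝ := fun s => b (max s 0) with hbb_def
  have hbbc : Continuous bb :=
    hb_cont.comp_continuous (continuous_id.max continuous_const)
      (fun x => Set.mem_Ici.2 (le_max_right _ _))
  set Bi : ℝ → ℝ := fun t => ∫ s in (0:ℝ)..t, bb s with hBi_def
  have hBid : ∀ t : ℝ, HasDerivAt Bi (bb t) t := fun t =>
    (intervalIntegral.integral_hasStrictDerivAt_right (hbbc.intervalIntegrable 0 t)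
      (hbbc.stronglyMeasurableAtFilter _ _) hbbc.continuousAt).hasDerivAt
  have hbb_eq : ∀ t, 0 ≤ t → bb t = b t := fun t ht => by
    simp [hbb_def, max_eq_left ht]
  set C : ℝ := ∫ s in Set.Ici (0:ℝ), b s with hC_def
  have hBi0 : Bi 0 = 0 := intervalIntegral.integral_same
  have hBi_le : ∀ t, 0 ≤ t → Bi t ≤ C := by
    intro t ht
    have h1 : Bi t = ∫ s in Set.Ioc 0 t, b s := by
      simp only [hBi_def]
      rw [intervalIntegral.integral_of_le ht]
      apply MeasureTheory.setIntegral_congr_fun measurableSet_Ioc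
      intro s hs
      exact hbb_eq s hs.1.le
    rw [h1, hC_def]
    apply MeasureTheory.setIntegral_mono_set hb_int
    · exact (MeasureTheory.ae_restrict_iff' measurableSet_Ici).2
        (MeasureTheory.ae_of_all _ fun x hx => (hb_pos x hx).le)
    · exact HasSubset.Subset.eventuallyLE (fun x hx => hx.1.le)
  -- Gronwall: G := Hf * exp((2/ε) Bi) is nondecreasing on Ici 0
  set G : ℝ → ℝ := fun t => Hf t * Real.exp (2 / ε * Bi t) with hG_def
  have hGd : ∀ t, 0 ≤ t → HasDerivWithinAt G
      (-(2 * b t * E t) * Real.exp (2 / ε * Bi t)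
        + Hf t * (Real.exp (2 / ε * Bi t) * (2 / ε * b t))) (Set.Ici 0) t := by
    intro t ht
    have hBi' : HasDerivWithinAt (fun t => 2 / ε * Bi t) (2 / ε * b t) (Set.Ici 0) t := by
      have h := ((hBid t).hasDerivWithinAt (s := Set.Ici 0)).const_mul (2 / ε)
      rwa [hbb_eq t ht] at h
    exact (hHd t ht).mul hBi'.exp
  have hG_mono : MonotoneOn G (Set.Ici 0) := by
    apply monotoneOn_of_hasDerivWithinAt_nonneg (convex_Ici 0)
      (fun t ht => (hGd t ht).continuousWithinAt)
      (f' := fun t => -(2 * b t * E t) * Real.exp (2 / ε * Bi t)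
        + Hf t * (Real.exp (2 / ε * Bi t) * (2 / ε * b t)))
    · intro x hx
      rw [interior_Ici] at hx
      exact (hGd x hx.le).mono (by rw [interior_Ici]; exact Set.Ioi_subset_Ici_self)
    · intro x hx
      rw [interior_Ici] at hx
      have hbx := (hb_pos x hx.le).le
      have hEx := hHf_lbE x hx.le
      have hexp := (Real.exp_pos (2 / ε * Bi x)).le
      have h2 : 2 * (b x * E x) ≤ 2 / ε * b x * Hf x := by
        have h3 : 2 / ε * b x * (ε * E x) ≤ 2 / ε * b x * Hf x :=
          mul_le_mul_of_nonneg_left hEx (by positivity)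
        have h4 : 2 / ε * b x * (ε * E x) = 2 * (b x * E x) := by
          field_simp
        linarith
      nlinarith [mul_le_mul_of_nonneg_right h2 hexp]
  -- positivity of the initial energy
  have hHf0_pos : 0 < Hf 0 := by
    have hM0 := hM_lb (F 0) (hF_nonneg 0)
    have hF0 : F 0 = ‖B u₀‖ ^ 2 := by simp [hF_def, hu0]
    have hE0 : E 0 = ‖u₁‖ ^ 2 := by simp [hE_def, hu1]
    simp only [hHf_def]
    rw [hE0]
    rcases (sq_nonneg ‖u₁‖).lt_or_eq with h | h
    · nlinarith [mul_pos hε h, mul_nonneg hμ₁.le (hF_nonneg 0), hM0]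
    · have hc : 0 < ‖B u₀‖ ^ 2 := by nlinarith
      have hc' : 0 < F 0 := by rw [hF0]; exact hc
      nlinarith [mul_pos hμ₁ hc', hM0, mul_nonneg hε.le (sq_nonneg ‖u₁‖)]
  -- the Gronwall lower bound
  set c0 : ℝ := Hf 0 / Real.exp (2 / ε * C) with hc0_def
  have hc0_pos : 0 < c0 := div_pos hHf0_pos (Real.exp_pos _)
  have hHf_lb : ∀ t, 0 ≤ t → c0 ≤ Hf t := by
    intro t ht
    have hmono := hG_mono Set.self_mem_Ici (Set.mem_Ici.2 ht) ht
    have hG0 : G 0 = Hf 0 := by simp [hG_def, hBi0]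
    have hexp_le : Real.exp (2 / ε * Bi t) ≤ Real.exp (2 / ε * C) :=
      Real.exp_le_exp.2 (mul_le_mul_of_nonneg_left (hBi_le t ht) (by positivity))
    rw [hc0_def, div_le_iff₀ (Real.exp_pos _)]
    calc Hf 0 = G 0 := hG0.symm
      _ ≤ G t := hmono
      _ = Hf t * Real.exp (2 / ε * Bi t) := rfl
      _ ≤ Hf t * Real.exp (2 / ε * C) :=
          mul_le_mul_of_nonneg_left hexp_le (hHf_nonneg t ht)
  -- upper bound on F and on M along the solution
  set R : ℝ := Hf 0 / μ₁ with hR_def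
  have hR_nonneg : 0 ≤ R := div_nonneg hHf0_pos.le hμ₁.le
  have hF_le : ∀ t, 0 ≤ t → F t ≤ R := by
    intro t ht
    have h1 : Hf t ≤ Hf 0 := hHf_anti Set.self_mem_Ici (Set.mem_Ici.2 ht) ht
    have h2 := hM_lb (F t) (hF_nonneg t)
    have h3 : M (F t) ≤ Hf t := by
      simp only [hHf_def]
      nlinarith [mul_nonneg hε.le (hE_nonneg t)]
    rw [hR_def, le_div_iff₀ hμ₁]
    nlinarith
  obtain ⟨x₀, hx₀, hmax⟩ := isCompact_Icc.exists_isMaxOn (Set.nonempty_Icc.2 hR_nonneg)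
    (hmc.continuousOn : ContinuousOn m (Set.Icc 0 R))
  have hμ₂_pos : 0 < m x₀ := lt_of_lt_of_le hμ₁ (hm_lb x₀ hx₀.1)
  have hM_ub : ∀ t, 0 ≤ t → M (F t) ≤ m x₀ * F t := by
    intro t ht
    have h := intervalIntegral.integral_mono_on (μ := MeasureTheory.volume) (hF_nonneg t)
      (hmc.intervalIntegrable 0 (F t))
      ((continuous_const : Continuous fun _ : ℝ => m x₀).intervalIntegrable 0 (F t))
      (fun x hx => hmax ⟨hx.1, hx.2.trans (hF_le t ht)⟩)
    simpa [mul_comm] using h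
  have hK_pos : (0:ℝ) < max ε (m x₀) := lt_max_of_lt_left hε
  have hfinal : ∀ t, 0 ≤ t → c0 / max ε (m x₀) ≤ E t + F t := by
    intro t ht
    have h1 := hHf_lb t ht
    have h2 := hM_ub t ht
    have hHt : Hf t = ε * E t + M (F t) := rfl
    have hKε : ε * E t ≤ max ε (m x₀) * E t :=
      mul_le_mul_of_nonneg_right (le_max_left ε (m x₀)) (hE_nonneg t)
    have hKμ : m x₀ * F t ≤ max ε (m x₀) * F t :=
      mul_le_mul_of_nonneg_right (le_max_right ε (m x₀)) (hF_nonneg t)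
    clear_value E F M Hf Bi G c0
    have h3 : Hf t ≤ max ε (m x₀) * (E t + F t) := by linarith [hKε, hKμ, h2, hHt]
    rw [div_le_iff₀ hK_pos]
    calc c0 ≤ Hf t := h1
      _ ≤ max ε (m x₀) * (E t + F t) := h3
      _ = (E t + F t) * max ε (m x₀) := mul_comm _ _
  -- conclusion
  have hev : ∀ᶠ t in Filter.atTop, c0 / max ε (m x₀) ≤ ‖u' t‖ ^ 2 + ‖B (u t)‖ ^ 2 := by
    filter_upwards [Filter.eventually_ge_atTop 0] with t ht
    exact hfinal t ht
  have hub : ∀ᶠ t in Filter.atTop, ‖u' t‖ ^ 2 + ‖B (u t)‖ ^ 2 ≤ Hf 0 / ε + R := by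
    filter_upwards [Filter.eventually_ge_atTop 0] with t ht
    have h1 : ε * E t ≤ Hf t := hHf_lbE t ht
    have h2 : Hf t ≤ Hf 0 := hHf_anti Set.self_mem_Ici (Set.mem_Ici.2 ht) ht
    have h3 : E t ≤ Hf 0 / ε := by
      rw [le_div_iff₀ hε]
      calc E t * ε = ε * E t := mul_comm _ _
        _ ≤ Hf t := h1
        _ ≤ Hf 0 := h2
    have h4 : F t ≤ R := hF_le t ht
    have hEt : E t = ‖u' t‖ ^ 2 := rfl
    have hFt : F t = ‖B (u t)‖ ^ 2 := rfl
    rw [← hEt, ← hFt]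
    exact add_le_add h3 h4
  have hcb : Filter.IsCoboundedUnder (· ≥ ·) Filter.atTop
      (fun t => ‖u' t‖ ^ 2 + ‖B (u t)‖ ^ 2) :=
    Filter.isCoboundedUnder_ge_of_eventually_le _ hub
  calc (0:ℝ) < c0 / max ε (m x₀) := div_pos hc0_pos hK_pos
    _ ≤ _ := Filter.le_liminf_of_le hcb hev
end

section
/- Let $u$ solve $u'(t)=-(1+t)\,m(|A^{1/2}u(t)|^2)Au(t)$ with $u_0\in D(A^{k/2})$, $k\ge 1$, $m\ge\mu_1>0$. Then there is a constant $\gamma_k$ depending only on $k$ and $\mu_1$ such that $(1+t)^{2k}|A^{k/2}u(t)|^2\le\gamma_k(|u_0|^2+|A^{k/2}u_0|^2)$ for all $t\ge0$, and $\int_0^{+\infty}(1+s)^{2k+1}|A^{(k+1)/2}u(s)|^2\,ds\le\gamma_k(|u_0|^2+|A^{k/2}u_0|^2)$. -/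
open scoped RealInnerProductSpace

open Set intervalIntegral MeasureTheory

lemma primitive_hasDerivWithinAt {f : ℝ → ℝ} (hf : ContinuousOn f (Set.Ici 0))
    {t : ℝ} (ht : 0 ≤ t) :
    HasDerivWithinAt (fun x => ∫ s in (0:ℝ)..x, f s) (f t) (Set.Ici 0) t := by
  have hmeasIci : AEStronglyMeasurable f (MeasureTheory.volume.restrict (Set.Ici 0)) :=
    hf.aestronglyMeasurable measurableSet_Ici
  have hint : IntervalIntegrable f MeasureTheory.volume 0 t := by
    apply ContinuousOn.intervalIntegrable
    rw [Set.uIcc_of_le ht]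
    exact hf.mono Set.Icc_subset_Ici_self
  rcases eq_or_lt_of_le ht with h0 | h0
  · subst h0
    refine intervalIntegral.integral_hasDerivWithinAt_right hint
      (t := Set.Ioi 0) ⟨Set.Ici 0, ?_, hmeasIci⟩
      ((hf 0 Set.self_mem_Ici).mono Set.Ioi_subset_Ici_self)
    exact nhdsWithin_mono _ Set.Ioi_subset_Ici_self self_mem_nhdsWithin
  · have hni : Set.Ici (0:ℝ) ∈ nhds t := Ici_mem_nhds h0
    have hca : ContinuousAt f t := (hf t ht).continuousAt hni
    exact (intervalIntegral.integral_hasDerivAt_right hint ⟨Set.Ici 0, hni, hmeasIci⟩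
      hca).hasDerivWithinAt

section Key

variable {H : Type} [NormedAddCommGroup H] [InnerProductSpace ℝ H]
  (B : H →L[ℝ] H) (μ₁ : ℝ) (m : ℝ → ℝ) (u u' : ℝ → H) (u₀ : H)

/-- The core differential-energy inequality, for general power `n` of `B` and weight `t^p`. -/
lemma key_energy
    (hsym : ∀ x y, ⟪B x, y⟫ = ⟪x, B y⟫)
    (hμ₁ : 0 < μ₁) (hm : ∀ σ, 0 ≤ σ → μ₁ ≤ m σ)
    (h0 : u 0 = u₀)
    (hderiv : ∀ t, 0 ≤ t → HasDerivWithinAt u (u' t) (Set.Ici 0) t)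
    (heq : ∀ t, 0 ≤ t → u' t = -(((1 + t) * m (‖B (u t)‖ ^ 2)) • (B ^ 2) (u t)))
    (n p : ℕ) {T : ℝ} (hT : 0 ≤ T) :
    T ^ p * ‖(B ^ n) (u T)‖ ^ 2
      + 2 * μ₁ * ∫ s in (0:ℝ)..T, (s ^ p + s ^ (p + 1)) * ‖(B ^ (n + 1)) (u s)‖ ^ 2
    ≤ (0:ℝ) ^ p * ‖(B ^ n) u₀‖ ^ 2
      + p * ∫ s in (0:ℝ)..T, s ^ (p - 1) * ‖(B ^ n) (u s)‖ ^ 2 := by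
  have hu_cont : ContinuousOn u (Set.Ici 0) := fun t ht => (hderiv t ht).continuousWithinAt
  -- continuity of the squared norms
  have hNcont : ∀ q : ℕ, ContinuousOn (fun s => ‖(B ^ q) (u s)‖ ^ 2) (Set.Ici 0) := fun q =>
    (((B ^ q).continuous.comp_continuousOn hu_cont).norm.pow 2)
  -- derivative of the squared norm
  have hNderiv : ∀ (q : ℕ) (t : ℝ), 0 ≤ t →
      HasDerivWithinAt (fun s => ‖(B ^ q) (u s)‖ ^ 2)
        (-(2 * ((1 + t) * m (‖B (u t)‖ ^ 2))) * ‖(B ^ (q + 1)) (u t)‖ ^ 2)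
        (Set.Ici 0) t := by
    intro q t ht
    have hv : HasDerivWithinAt (fun s => (B ^ q) (u s)) ((B ^ q) (u' t)) (Set.Ici 0) t :=
      (B ^ q).hasFDerivAt.comp_hasDerivWithinAt t (hderiv t ht)
    have hi := hv.inner ℝ hv
    have hval : ⟪(B ^ q) (u t), (B ^ q) (u' t)⟫ + ⟪(B ^ q) (u' t), (B ^ q) (u t)⟫
        = -(2 * ((1 + t) * m (‖B (u t)‖ ^ 2))) * ‖(B ^ (q + 1)) (u t)‖ ^ 2 := by
      have hkey : ⟪(B ^ q) (u t), (B ^ q) ((B ^ 2) (u t))⟫ = ‖(B ^ (q + 1)) (u t)‖ ^ 2 := by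
        have e1 : (B ^ q) ((B ^ 2) (u t)) = B ((B ^ (q + 1)) (u t)) := by
          rw [← ContinuousLinearMap.mul_apply, ← pow_add, ← ContinuousLinearMap.mul_apply,
            ← pow_succ']
        have e2 : B ((B ^ q) (u t)) = (B ^ (q + 1)) (u t) := by
          rw [← ContinuousLinearMap.mul_apply, ← pow_succ']
        rw [e1, ← hsym, e2, real_inner_self_eq_norm_sq]
      have hkey2 : ⟪(B ^ q) ((B ^ 2) (u t)), (B ^ q) (u t)⟫ = ‖(B ^ (q + 1)) (u t)‖ ^ 2 := by
        rw [real_inner_comm]; exact hkey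
      rw [heq t ht]
      simp only [map_neg, _root_.map_smul, inner_neg_right, inner_neg_left,
        real_inner_smul_right, real_inner_smul_left, hkey,
        hkey2]
      ring
    have := hi
    rw [hval] at this
    have hfun : (fun s => ⟪(B ^ q) (u s), (B ^ q) (u s)⟫) = fun s => ‖(B ^ q) (u s)‖ ^ 2 := by
      funext s; exact real_inner_self_eq_norm_sq _
    rwa [hfun] at this
  -- the energy function
  set N : ℕ → ℝ → ℝ := fun q s => ‖(B ^ q) (u s)‖ ^ 2 with hN
  set g : ℝ → ℝ := fun t => t ^ p * N n t
      + 2 * μ₁ * (∫ s in (0:ℝ)..t, (s ^ p + s ^ (p + 1)) * N (n + 1) s)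
      - p * (∫ s in (0:ℝ)..t, s ^ (p - 1) * N n s) with hg
  have hc1 : ContinuousOn (fun s => (s ^ p + s ^ (p + 1)) * N (n + 1) s) (Set.Ici 0) :=
    (((continuous_pow p).add (continuous_pow (p + 1))).continuousOn).mul (hNcont (n + 1))
  have hc2 : ContinuousOn (fun s => s ^ (p - 1) * N n s) (Set.Ici 0) :=
    ((continuous_pow (p - 1)).continuousOn).mul (hNcont n)
  -- the candidate derivative of `g`
  set D : ℝ → ℝ := fun t =>
      ((p : ℝ) * t ^ (p - 1) * N n t
        + t ^ p * (-(2 * ((1 + t) * m (‖B (u t)‖ ^ 2))) * N (n + 1) t))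
      + 2 * μ₁ * ((t ^ p + t ^ (p + 1)) * N (n + 1) t)
      - p * (t ^ (p - 1) * N n t) with hD
  have hgderiv : ∀ t, 0 ≤ t → HasDerivWithinAt g (D t) (Set.Ici 0) t := by
    intro t ht
    have hP : HasDerivWithinAt (fun s => s ^ p * N n s)
        ((p : ℝ) * t ^ (p - 1) * N n t
          + t ^ p * (-(2 * ((1 + t) * m (‖B (u t)‖ ^ 2))) * N (n + 1) t)) (Set.Ici 0) t :=
      ((hasDerivAt_pow p t).hasDerivWithinAt).mul (hNderiv n t ht)
    have hG1 := (primitive_hasDerivWithinAt hc1 ht).const_mul (2 * μ₁)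
    have hG2 := (primitive_hasDerivWithinAt hc2 ht).const_mul (p : ℝ)
    exact (hP.add hG1).sub hG2
  have hgcont : ContinuousOn g (Set.Ici 0) := fun t ht => (hgderiv t ht).continuousWithinAt
  have hDnonpos : ∀ t ∈ interior (Set.Ici (0:ℝ)), D t ≤ 0 := by
    intro t ht
    rw [interior_Ici] at ht
    have ht0 : (0:ℝ) ≤ t := le_of_lt ht
    have hmt : μ₁ ≤ m (‖B (u t)‖ ^ 2) := hm _ (by positivity)
    have hNn1 : 0 ≤ N (n + 1) t := by simp only [hN]; positivity
    have hps : t ^ (p + 1) = t ^ p * t := pow_succ t p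
    have hkey : 2 * μ₁ * (t ^ p + t ^ (p + 1)) ≤
        2 * (t ^ p * (1 + t)) * m (‖B (u t)‖ ^ 2) := by
      have h1 : 2 * (t ^ p * (1 + t)) * μ₁ ≤ 2 * (t ^ p * (1 + t)) * m (‖B (u t)‖ ^ 2) :=
        mul_le_mul_of_nonneg_left hmt (by positivity)
      nlinarith [h1]
    simp only [hD]
    nlinarith [mul_nonneg hNn1 (sub_nonneg.mpr hkey)]
  have hanti : AntitoneOn g (Set.Ici 0) := by
    refine antitoneOn_of_hasDerivWithinAt_nonpos (convex_Ici 0) hgcont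
      (fun x hx => ((hgderiv x (interior_subset hx)).mono interior_subset)) hDnonpos
  have hle : g T ≤ g 0 := hanti Set.self_mem_Ici hT hT
  have hg0 : g 0 = (0:ℝ) ^ p * ‖(B ^ n) u₀‖ ^ 2 := by
    simp only [hg, intervalIntegral.integral_same, hN, h0]
    ring
  rw [hg0] at hle
  simp only [hg, hN] at hle
  linarith

/-- Interval integrability of the basic integrands. -/
lemma intInt (hderiv : ∀ t, 0 ≤ t → HasDerivWithinAt u (u' t) (Set.Ici 0) t)
    (q r : ℕ) {T : ℝ} (hT : 0 ≤ T) :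
    IntervalIntegrable (fun s => s ^ q * ‖(B ^ r) (u s)‖ ^ 2) MeasureTheory.volume 0 T := by
  have hu_cont : ContinuousOn u (Set.Ici 0) := fun t ht => (hderiv t ht).continuousWithinAt
  apply ContinuousOn.intervalIntegrable
  rw [Set.uIcc_of_le hT]
  exact (((continuous_pow q).continuousOn).mul
    (((B ^ r).continuous.comp_continuousOn hu_cont).norm.pow 2)).mono Set.Icc_subset_Ici_self

/-- Nonnegativity of the basic integrals. -/
lemma intNonneg (q r : ℕ) {T : ℝ} (hT : 0 ≤ T) :
    0 ≤ ∫ s in (0:ℝ)..T, s ^ q * ‖(B ^ r) (u s)‖ ^ 2 := by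
  apply intervalIntegral.integral_nonneg hT
  intro x hx
  have : 0 ≤ x := hx.1
  positivity

/-- Restated core inequality with the weight integral split in two. -/
lemma key_energy' (hsym : ∀ x y, ⟪B x, y⟫ = ⟪x, B y⟫)
    (hμ₁ : 0 < μ₁) (hm : ∀ σ, 0 ≤ σ → μ₁ ≤ m σ)
    (h0 : u 0 = u₀)
    (hderiv : ∀ t, 0 ≤ t → HasDerivWithinAt u (u' t) (Set.Ici 0) t)
    (heq : ∀ t, 0 ≤ t → u' t = -(((1 + t) * m (‖B (u t)‖ ^ 2)) • (B ^ 2) (u t)))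
    (n p : ℕ) {T : ℝ} (hT : 0 ≤ T) :
    T ^ p * ‖(B ^ n) (u T)‖ ^ 2
      + 2 * μ₁ * ((∫ s in (0:ℝ)..T, s ^ p * ‖(B ^ (n + 1)) (u s)‖ ^ 2)
        + ∫ s in (0:ℝ)..T, s ^ (p + 1) * ‖(B ^ (n + 1)) (u s)‖ ^ 2)
    ≤ (0:ℝ) ^ p * ‖(B ^ n) u₀‖ ^ 2
      + p * ∫ s in (0:ℝ)..T, s ^ (p - 1) * ‖(B ^ n) (u s)‖ ^ 2 := by
  have h := key_energy B μ₁ m u u' u₀ hsym hμ₁ hm h0 hderiv heq n p hT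
  have hsplit : (∫ s in (0:ℝ)..T, (s ^ p + s ^ (p + 1)) * ‖(B ^ (n + 1)) (u s)‖ ^ 2)
      = (∫ s in (0:ℝ)..T, s ^ p * ‖(B ^ (n + 1)) (u s)‖ ^ 2)
        + ∫ s in (0:ℝ)..T, s ^ (p + 1) * ‖(B ^ (n + 1)) (u s)‖ ^ 2 := by
    rw [← intervalIntegral.integral_add (intInt B u u' hderiv p (n + 1) hT)
      (intInt B u u' hderiv (p + 1) (n + 1) hT)]
    congr 1; funext s; ring
  rw [hsplit] at h
  exact h

/-- The inductive chain of weighted energy estimates. -/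
lemma chain (hsym : ∀ x y, ⟪B x, y⟫ = ⟪x, B y⟫)
    (hμ₁ : 0 < μ₁) (hm : ∀ σ, 0 ≤ σ → μ₁ ≤ m σ)
    (h0 : u 0 = u₀)
    (hderiv : ∀ t, 0 ≤ t → HasDerivWithinAt u (u' t) (Set.Ici 0) t)
    (heq : ∀ t, 0 ≤ t → u' t = -(((1 + t) * m (‖B (u t)‖ ^ 2)) • (B ^ 2) (u t)))
    (j : ℕ) {T : ℝ} (hT : 0 ≤ T) :
    T ^ (2 * j) * ‖(B ^ j) (u T)‖ ^ 2
      + 2 * μ₁ * ∫ s in (0:ℝ)..T, s ^ (2 * j + 1) * ‖(B ^ (j + 1)) (u s)‖ ^ 2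
    ≤ ((j.factorial : ℝ) / μ₁ ^ j) * ‖u₀‖ ^ 2 := by
  induction j with
  | zero =>
    have h := key_energy' B μ₁ m u u' u₀ hsym hμ₁ hm h0 hderiv heq 0 0 hT
    have h1 := intNonneg B u 0 (0 + 1) hT
    norm_num at h h1 ⊢
    nlinarith [mul_nonneg (le_of_lt hμ₁) h1]
  | succ j ih =>
    have h := key_energy' B μ₁ m u u' u₀ hsym hμ₁ hm h0 hderiv heq (j + 1) (2 * j + 2) hT
    have he0 : ((0:ℝ)) ^ (2 * j + 2) = 0 := by
      exact zero_pow (by omega)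
    have hsub : 2 * j + 2 - 1 = 2 * j + 1 := rfl
    rw [he0, hsub, zero_mul, zero_add] at h
    have hb := intNonneg B u (2 * j + 2) (j + 1 + 1) hT
    have hd_le : 2 * μ₁ * (∫ s in (0:ℝ)..T, s ^ (2 * j + 1) * ‖(B ^ (j + 1)) (u s)‖ ^ 2)
        ≤ ((j.factorial : ℝ) / μ₁ ^ j) * ‖u₀‖ ^ 2 := by
      have hTn : 0 ≤ T ^ (2 * j) * ‖(B ^ j) (u T)‖ ^ 2 := by positivity
      linarith [ih]
    have hcast : ((2 * j + 2 : ℕ) : ℝ)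
          * (∫ s in (0:ℝ)..T, s ^ (2 * j + 1) * ‖(B ^ (j + 1)) (u s)‖ ^ 2)
        = (((j : ℝ) + 1) / μ₁)
          * (2 * μ₁ * ∫ s in (0:ℝ)..T, s ^ (2 * j + 1) * ‖(B ^ (j + 1)) (u s)‖ ^ 2) := by
      push_cast
      field_simp
    have hmul := mul_le_mul_of_nonneg_left hd_le (show (0:ℝ) ≤ ((j : ℝ) + 1) / μ₁ by positivity)
    have hKeq : (((j : ℝ) + 1) / μ₁) * (((j.factorial : ℝ) / μ₁ ^ j) * ‖u₀‖ ^ 2)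
        = (((j + 1).factorial : ℝ) / μ₁ ^ (j + 1)) * ‖u₀‖ ^ 2 := by
      rw [Nat.factorial_succ]
      push_cast
      field_simp
      ring
    have e1 : 2 * (j + 1) = 2 * j + 2 := by ring
    have e2 : 2 * (j + 1) + 1 = 2 * j + 2 + 1 := by ring
    rw [e1]
    nlinarith [h, hmul, hcast, hKeq, mul_nonneg (le_of_lt hμ₁) hb]

end Key

lemma one_add_pow_le (q : ℕ) {t : ℝ} (ht : 0 ≤ t) :
    (1 + t) ^ q ≤ 2 ^ q * (1 + t ^ q) := by
  rcases le_total t 1 with h | h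
  · have h1 : (1 + t) ^ q ≤ 2 ^ q := pow_le_pow_left₀ (by linarith) (by linarith) q
    nlinarith [pow_nonneg ht q, pow_pos (show (0:ℝ) < 2 by norm_num) q]
  · have h1 : (1 + t) ^ q ≤ (2 * t) ^ q := pow_le_pow_left₀ (by linarith) (by linarith) q
    rw [mul_pow] at h1
    nlinarith [pow_pos (show (0:ℝ) < 2 by norm_num) q]


/-- Parabolic decay estimates: there is a constant `γₖ` depending only on `k` and `μ₁`
such that `(1+t)^{2k}|A^{k/2}u(t)|² ≤ γₖ(|u₀|²+|A^{k/2}u₀|²)` and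
`∫₀^∞ (1+s)^{2k+1}|A^{(k+1)/2}u(s)|² ds ≤ γₖ(|u₀|²+|A^{k/2}u₀|²)`, with `A^{j/2} = B^j`. -/
theorem stmt_9 (k : ℕ) (hk : 1 ≤ k) (μ₁ : ℝ) (hμ₁ : 0 < μ₁) :
    ∃ γ : ℝ, 0 < γ ∧
      ∀ (H : Type) [NormedAddCommGroup H] [InnerProductSpace ℝ H],
        ∀ (B : H →L[ℝ] H),
          (∀ x y, ⟪B x, y⟫ = ⟪x, B y⟫) →
          (∀ x, 0 ≤ ⟪B x, x⟫) →
          ∀ (m : ℝ → ℝ), ContDiff ℝ 1 m → (∀ σ, 0 ≤ σ → μ₁ ≤ m σ) →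
          ∀ (u u' : ℝ → H) (u₀ : H), u 0 = u₀ →
            (∀ t, 0 ≤ t → HasDerivWithinAt u (u' t) (Set.Ici 0) t) →
            ContinuousOn u' (Set.Ici 0) →
            (∀ t, 0 ≤ t →
              u' t = -(((1 + t) * m (‖B (u t)‖ ^ 2)) • (B ^ 2) (u t))) →
            (∀ t, 0 ≤ t →
              (1 + t) ^ (2 * k) * ‖(B ^ k) (u t)‖ ^ 2 ≤
                γ * (‖u₀‖ ^ 2 + ‖(B ^ k) u₀‖ ^ 2)) ∧
            (∫ s in Set.Ioi (0:ℝ), (1 + s) ^ (2 * k + 1) * ‖(B ^ (k + 1)) (u s)‖ ^ 2) ≤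
              γ * (‖u₀‖ ^ 2 + ‖(B ^ k) u₀‖ ^ 2) := by
  have hKkpos : 0 < (k.factorial : ℝ) / μ₁ ^ k :=
    div_pos (Nat.cast_pos.mpr k.factorial_pos) (pow_pos hμ₁ k)
  set Kk : ℝ := (k.factorial : ℝ) / μ₁ ^ k with hKkdef
  have hhalf : 0 < 1 / (2 * μ₁) := div_pos one_pos (by linarith)
  set γ : ℝ := 2 ^ (2 * k + 1) * (1 + Kk) * (1 + 1 / (2 * μ₁)) with hγdef
  have hγpos : 0 < γ := by
    apply mul_pos (mul_pos (pow_pos (by norm_num) _) (by linarith)) (by linarith)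
  refine ⟨γ, hγpos, ?_⟩
  intro H _ _ B hsym hpos m hmC1 hm u u' u₀ h0 hderiv hcont' heq
  have hu_cont : ContinuousOn u (Set.Ici 0) := fun t ht => (hderiv t ht).continuousWithinAt
  have ha : (0:ℝ) ≤ ‖u₀‖ ^ 2 := by positivity
  have hb : (0:ℝ) ≤ ‖(B ^ k) u₀‖ ^ 2 := by positivity
  -- flat (unweighted) energy estimates at level k
  have hNk_le : ∀ T : ℝ, 0 ≤ T → ‖(B ^ k) (u T)‖ ^ 2 ≤ ‖(B ^ k) u₀‖ ^ 2 := by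
    intro T hT
    have h := key_energy' B μ₁ m u u' u₀ hsym hμ₁ hm h0 hderiv heq k 0 hT
    have h1 := intNonneg B u 0 (k + 1) hT
    have h2 := intNonneg B u (0 + 1) (k + 1) hT
    simp only [pow_zero, one_mul, Nat.cast_zero, zero_mul, add_zero] at h h1 h2
    nlinarith [mul_nonneg (le_of_lt hμ₁) h1, mul_nonneg (le_of_lt hμ₁) h2]
  have hI0_le : ∀ T : ℝ, 0 ≤ T →
      2 * μ₁ * (∫ s in (0:ℝ)..T, s ^ 0 * ‖(B ^ (k + 1)) (u s)‖ ^ 2) ≤ ‖(B ^ k) u₀‖ ^ 2 := by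
    intro T hT
    have h := key_energy' B μ₁ m u u' u₀ hsym hμ₁ hm h0 hderiv heq k 0 hT
    have h2 := intNonneg B u (0 + 1) (k + 1) hT
    have h3 : (0:ℝ) ≤ T ^ 0 * ‖(B ^ k) (u T)‖ ^ 2 := by positivity
    simp only [Nat.cast_zero, zero_mul, add_zero] at h
    nlinarith [mul_nonneg (le_of_lt hμ₁) h2]
  -- weighted chain estimates at level k
  have htk : ∀ T : ℝ, 0 ≤ T → T ^ (2 * k) * ‖(B ^ k) (u T)‖ ^ 2 ≤ Kk * ‖u₀‖ ^ 2 := by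
    intro T hT
    have h := chain B μ₁ m u u' u₀ hsym hμ₁ hm h0 hderiv heq k hT
    have h1 := intNonneg B u (2 * k + 1) (k + 1) hT
    nlinarith [mul_nonneg (le_of_lt hμ₁) h1]
  have hIk : ∀ T : ℝ, 0 ≤ T →
      2 * μ₁ * (∫ s in (0:ℝ)..T, s ^ (2 * k + 1) * ‖(B ^ (k + 1)) (u s)‖ ^ 2)
        ≤ Kk * ‖u₀‖ ^ 2 := by
    intro T hT
    have h := chain B μ₁ m u u' u₀ hsym hμ₁ hm h0 hderiv heq k hT
    have h1 : (0:ℝ) ≤ T ^ (2 * k) * ‖(B ^ k) (u T)‖ ^ 2 := by positivity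
    linarith
  have hγ1 : 2 ^ (2 * k) * (1 + Kk) ≤ γ := by
    rw [hγdef]
    have h1 : (2:ℝ) ^ (2 * k) ≤ 2 ^ (2 * k + 1) := by
      apply pow_le_pow_right₀ (by norm_num) (by omega)
    have h2 : (2:ℝ) ^ (2 * k) * (1 + Kk) ≤ 2 ^ (2 * k + 1) * (1 + Kk) :=
      mul_le_mul_of_nonneg_right h1 (by linarith)
    have h3 : (2:ℝ) ^ (2 * k + 1) * (1 + Kk) ≤ 2 ^ (2 * k + 1) * (1 + Kk) * (1 + 1 / (2 * μ₁)) :=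
      le_mul_of_one_le_right
        (by positivity) (by linarith)
    linarith
  constructor
  · -- pointwise decay estimate
    intro t ht
    have hp := one_add_pow_le (2 * k) ht
    have h1 := hNk_le t ht
    have h2 := htk t ht
    have hNt : (0:ℝ) ≤ ‖(B ^ k) (u t)‖ ^ 2 := by positivity
    have hc : (0:ℝ) < 2 ^ (2 * k) := pow_pos (by norm_num) _
    calc (1 + t) ^ (2 * k) * ‖(B ^ k) (u t)‖ ^ 2
        ≤ (2 ^ (2 * k) * (1 + t ^ (2 * k))) * ‖(B ^ k) (u t)‖ ^ 2 :=
          mul_le_mul_of_nonneg_right hp hNt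
      _ = 2 ^ (2 * k) * ‖(B ^ k) (u t)‖ ^ 2
          + 2 ^ (2 * k) * (t ^ (2 * k) * ‖(B ^ k) (u t)‖ ^ 2) := by ring
      _ ≤ 2 ^ (2 * k) * ‖(B ^ k) u₀‖ ^ 2 + 2 ^ (2 * k) * (Kk * ‖u₀‖ ^ 2) :=
          add_le_add (mul_le_mul_of_nonneg_left h1 hc.le) (mul_le_mul_of_nonneg_left h2 hc.le)
      _ ≤ (2 ^ (2 * k) * (1 + Kk)) * (‖u₀‖ ^ 2 + ‖(B ^ k) u₀‖ ^ 2) := by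
          nlinarith [mul_nonneg (mul_nonneg hc.le hKkpos.le) hb, mul_nonneg hc.le ha,
            mul_nonneg hc.le hb, mul_nonneg (mul_nonneg hc.le hKkpos.le) ha]
      _ ≤ γ * (‖u₀‖ ^ 2 + ‖(B ^ k) u₀‖ ^ 2) :=
          mul_le_mul_of_nonneg_right hγ1 (by positivity)
  · -- integral estimate
    set W : ℝ → ℝ := fun s => (1 + s) ^ (2 * k + 1) * ‖(B ^ (k + 1)) (u s)‖ ^ 2 with hWdef
    have hNcont : ContinuousOn (fun s => ‖(B ^ (k + 1)) (u s)‖ ^ 2) (Set.Ici 0) :=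
      ((B ^ (k + 1)).continuous.comp_continuousOn hu_cont).norm.pow 2
    have hWcont : ContinuousOn W (Set.Ici 0) :=
      (((continuous_const.add continuous_id).pow _).continuousOn).mul hNcont
    set M : ℝ := 2 ^ (2 * k + 1) * ((‖(B ^ k) u₀‖ ^ 2 + Kk * ‖u₀‖ ^ 2) / (2 * μ₁)) with hMdef
    have hbnd : ∀ i : ℝ, 0 ≤ i → (∫ s in (0:ℝ)..i, W s) ≤ M := by
      intro i hi
      have hWint : IntervalIntegrable W MeasureTheory.volume 0 i := by
        apply ContinuousOn.intervalIntegrable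
        rw [Set.uIcc_of_le hi]
        exact hWcont.mono Set.Icc_subset_Ici_self
      have hVint : IntervalIntegrable (fun s => (2:ℝ) ^ (2 * k + 1)
          * (s ^ 0 * ‖(B ^ (k + 1)) (u s)‖ ^ 2 + s ^ (2 * k + 1) * ‖(B ^ (k + 1)) (u s)‖ ^ 2))
          MeasureTheory.volume 0 i := by
        apply ContinuousOn.intervalIntegrable
        rw [Set.uIcc_of_le hi]
        refine (ContinuousOn.mul continuousOn_const ?_).mono Set.Icc_subset_Ici_self
        exact (((continuous_pow 0).continuousOn).mul hNcont).add
          (((continuous_pow (2 * k + 1)).continuousOn).mul hNcont)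
      have hpt : ∀ x ∈ Set.Icc (0:ℝ) i, W x ≤ (2:ℝ) ^ (2 * k + 1)
          * (x ^ 0 * ‖(B ^ (k + 1)) (u x)‖ ^ 2 + x ^ (2 * k + 1) * ‖(B ^ (k + 1)) (u x)‖ ^ 2) := by
        intro x hx
        have hx0 : (0:ℝ) ≤ x := hx.1
        have hp := one_add_pow_le (2 * k + 1) hx0
        have hN : (0:ℝ) ≤ ‖(B ^ (k + 1)) (u x)‖ ^ 2 := by positivity
        calc W x ≤ (2 ^ (2 * k + 1) * (1 + x ^ (2 * k + 1))) * ‖(B ^ (k + 1)) (u x)‖ ^ 2 :=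
              mul_le_mul_of_nonneg_right hp hN
          _ = _ := by ring
      have hmono := intervalIntegral.integral_mono_on hi hWint hVint hpt
      have hsplit : (∫ s in (0:ℝ)..i, (2:ℝ) ^ (2 * k + 1)
            * (s ^ 0 * ‖(B ^ (k + 1)) (u s)‖ ^ 2 + s ^ (2 * k + 1) * ‖(B ^ (k + 1)) (u s)‖ ^ 2))
          = 2 ^ (2 * k + 1) * ((∫ s in (0:ℝ)..i, s ^ 0 * ‖(B ^ (k + 1)) (u s)‖ ^ 2)
            + ∫ s in (0:ℝ)..i, s ^ (2 * k + 1) * ‖(B ^ (k + 1)) (u s)‖ ^ 2) := by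
        rw [intervalIntegral.integral_const_mul, intervalIntegral.integral_add
          (intInt B u u' hderiv 0 (k + 1) hi) (intInt B u u' hderiv (2 * k + 1) (k + 1) hi)]
      rw [hsplit] at hmono
      have hsum : (∫ s in (0:ℝ)..i, s ^ 0 * ‖(B ^ (k + 1)) (u s)‖ ^ 2)
            + (∫ s in (0:ℝ)..i, s ^ (2 * k + 1) * ‖(B ^ (k + 1)) (u s)‖ ^ 2)
          ≤ (‖(B ^ k) u₀‖ ^ 2 + Kk * ‖u₀‖ ^ 2) / (2 * μ₁) := by
        rw [le_div_iff₀ (by linarith : (0:ℝ) < 2 * μ₁)]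
        linarith [hI0_le i hi, hIk i hi]
      calc (∫ s in (0:ℝ)..i, W s) ≤ _ := hmono
        _ ≤ M := mul_le_mul_of_nonneg_left hsum (by positivity)
    have hWi : ∀ i : ℝ, MeasureTheory.IntegrableOn W (Set.Ioc 0 i) MeasureTheory.volume := by
      intro i
      rcases le_total i 0 with h | h
      · rw [Set.Ioc_eq_empty (by simpa using h)]
        exact MeasureTheory.integrableOn_empty
      · exact ((hWcont.mono Set.Icc_subset_Ici_self).integrableOn_Icc).mono_set
          Set.Ioc_subset_Icc_self
    have hWInt : MeasureTheory.IntegrableOn W (Set.Ioi 0) MeasureTheory.volume := by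
      apply MeasureTheory.integrableOn_Ioi_of_intervalIntegral_norm_bounded M 0 hWi
        Filter.tendsto_id
      filter_upwards [Filter.eventually_ge_atTop (0:ℝ)] with i hi
      have hEq : Set.EqOn (fun x => ‖W x‖) W (Set.uIcc 0 i) := by
        intro x hx
        rw [Set.uIcc_of_le hi] at hx
        have hWx : 0 ≤ W x := mul_nonneg (pow_nonneg (by linarith [hx.1]) _) (by positivity)
        exact Real.norm_of_nonneg hWx
      rw [intervalIntegral.integral_congr hEq]
      exact hbnd i hi
    have htend := MeasureTheory.intervalIntegral_tendsto_integral_Ioi 0 hWInt Filter.tendsto_id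
    have hIoi : (∫ s in Set.Ioi (0:ℝ), W s) ≤ M := by
      apply le_of_tendsto htend
      filter_upwards [Filter.eventually_ge_atTop (0:ℝ)] with i hi using hbnd i hi
    refine le_trans hIoi ?_
    have e1 : ‖(B ^ k) u₀‖ ^ 2 + Kk * ‖u₀‖ ^ 2
        ≤ (1 + Kk) * (‖u₀‖ ^ 2 + ‖(B ^ k) u₀‖ ^ 2) := by
      nlinarith [mul_nonneg hKkpos.le hb]
    calc M = 2 ^ (2 * k + 1) * (‖(B ^ k) u₀‖ ^ 2 + Kk * ‖u₀‖ ^ 2) / (2 * μ₁) := by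
          rw [hMdef, mul_div_assoc]
      _ ≤ γ * (‖u₀‖ ^ 2 + ‖(B ^ k) u₀‖ ^ 2) := by
          rw [div_le_iff₀ (by linarith : (0:ℝ) < 2 * μ₁)]
          calc 2 ^ (2 * k + 1) * (‖(B ^ k) u₀‖ ^ 2 + Kk * ‖u₀‖ ^ 2)
              ≤ 2 ^ (2 * k + 1) * ((1 + Kk) * (‖u₀‖ ^ 2 + ‖(B ^ k) u₀‖ ^ 2)) :=
                mul_le_mul_of_nonneg_left e1 (by positivity)
            _ ≤ (2 ^ (2 * k + 1) * ((1 + Kk) * (‖u₀‖ ^ 2 + ‖(B ^ k) u₀‖ ^ 2))) * (2 * μ₁ + 1) :=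
                le_mul_of_one_le_right (by positivity) (by linarith)
            _ = γ * (‖u₀‖ ^ 2 + ‖(B ^ k) u₀‖ ^ 2) * (2 * μ₁) := by
                rw [hγdef]
                field_simp
end

section
/- Let $u_\varepsilon$ solve $\varepsilon u''+\frac{1}{1+t}u'+c_\varepsilon(t)Au=0$ on $[0,+\infty)$ with $\mu_1\le c_\varepsilon(t)\le\mu_2$, and suppose $\varepsilon|u_\varepsilon'(t)|^2\le k_1(1+t)^{-2}$ and $\varepsilon|A^{1/2}u_\varepsilon'(t)|^2+|Au_\varepsilon(t)|^2\le k_4(1+t)^{-4}$ for all $t\ge0$. Then $G_\varepsilon(t):=(1+t)^2|u_\varepsilon'(t)|^2$ satisfies, for $\varepsilon\le 1/2$, the differential inequality $G_\varepsilon'(t)\le\frac{1}{\varepsilon(1+t)}\left(-G_\varepsilon(t)+2\mu_2\sqrt{k_4}\sqrt{G_\varepsilon(t)}\right)$, and consequently $|u_\varepsilon'(t)|^2\le\frac{\max\{G_\varepsilon(0),4\mu_2^2 k_4\}}{(1+t)^2}$ for all $t\ge 0$. -/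
set_option maxHeartbeats 1000000


open scoped RealInnerProductSpace

/-- Differential inequality for `G_ε(t) = (1+t)²|u_ε'(t)|²` and the resulting decay
estimate `|u_ε'(t)|² ≤ max{G_ε(0), 4μ₂²k₄}/(1+t)²`. -/
theorem stmt_17 {H : Type*} [NormedAddCommGroup H] [InnerProductSpace ℝ H]
    (A B : H →L[ℝ] H)
    (hB_sq : ∀ x, B (B x) = A x)
    (hA_sa : ∀ x y, ⟪A x, y⟫ = ⟪x, A y⟫)
    (hB_sa : ∀ x y, ⟪B x, y⟫ = ⟪x, B y⟫)
    (m : ℝ → ℝ) (hm : ContDiff ℝ 1 m)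
    (μ₁ μ₂ k₁ k₄ ε : ℝ) (hμ₁ : 0 < μ₁) (hμ₂ : 0 < μ₂) (hk₁ : 0 < k₁) (hk₄ : 0 < k₄)
    (hε : 0 < ε) (hε2 : ε ≤ 1 / 2)
    (u u' u'' : ℝ → H)
    (hu : ∀ t, 0 ≤ t → HasDerivWithinAt u (u' t) (Set.Ici 0) t)
    (hu' : ∀ t, 0 ≤ t → HasDerivWithinAt u' (u'' t) (Set.Ici 0) t)
    (heq : ∀ t, 0 ≤ t →
      ε • u'' t + (1 / (1 + t)) • u' t + m (‖B (u t)‖ ^ 2) • A (u t) = 0)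
    (hc_lb : ∀ t, 0 ≤ t → μ₁ ≤ m (‖B (u t)‖ ^ 2))
    (hc_ub : ∀ t, 0 ≤ t → m (‖B (u t)‖ ^ 2) ≤ μ₂)
    (hdecay1 : ∀ t, 0 ≤ t → ε * ‖u' t‖ ^ 2 ≤ k₁ / (1 + t) ^ 2)
    (hdecay4 : ∀ t, 0 ≤ t →
      ε * ‖B (u' t)‖ ^ 2 + ‖A (u t)‖ ^ 2 ≤ k₄ / (1 + t) ^ 4) :
    (∀ t, 0 ≤ t → ∀ d : ℝ,
        HasDerivWithinAt (fun s => (1 + s) ^ 2 * ‖u' s‖ ^ 2) d (Set.Ici 0) t →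
        d ≤ 1 / (ε * (1 + t)) *
          (-((1 + t) ^ 2 * ‖u' t‖ ^ 2) +
            2 * μ₂ * Real.sqrt k₄ * Real.sqrt ((1 + t) ^ 2 * ‖u' t‖ ^ 2))) ∧
      ∀ t, 0 ≤ t →
        ‖u' t‖ ^ 2 ≤ max (‖u' 0‖ ^ 2) (4 * μ₂ ^ 2 * k₄) / (1 + t) ^ 2 := by
  have sk := Real.sqrt k₄
  set D : ℝ → ℝ := fun t => 2 * (1 + t) * ‖u' t‖ ^ 2 + (1 + t) ^ 2 * (2 * ⟪u'' t, u' t⟫)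
    with hD
  -- derivative of G
  have hG : ∀ t, 0 ≤ t →
      HasDerivWithinAt (fun s => (1 + s) ^ 2 * ‖u' s‖ ^ 2) (D t) (Set.Ici 0) t := by
    intro t ht
    have h1 : HasDerivWithinAt (fun s : ℝ => (1 + s) ^ 2) (2 * (1 + t)) (Set.Ici 0) t := by
      have h0 : HasDerivWithinAt (fun s : ℝ => 1 + s) 1 (Set.Ici 0) t :=
        (hasDerivWithinAt_id t _).const_add 1
      have := h0.pow 2
      simpa [Pi.pow_def] using this
    have h2 : HasDerivWithinAt (fun s => ⟪u' s, u' s⟫) (⟪u' t, u'' t⟫ + ⟪u'' t, u' t⟫)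
        (Set.Ici 0) t := (hu' t ht).inner ℝ (hu' t ht)
    have h2' : HasDerivWithinAt (fun s => ‖u' s‖ ^ 2) (2 * ⟪u'' t, u' t⟫) (Set.Ici 0) t := by
      convert h2 using 1
      · funext s; rw [real_inner_self_eq_norm_sq]
      · rw [real_inner_comm (u' t) (u'' t)]; ring
    have := h1.mul h2'
    simpa [hD, Pi.mul_def] using this
  -- the key differential inequality
  have key : ∀ t, 0 ≤ t → D t ≤ 1 / (ε * (1 + t)) *
      (-((1 + t) ^ 2 * ‖u' t‖ ^ 2) +
        2 * μ₂ * Real.sqrt k₄ * Real.sqrt ((1 + t) ^ 2 * ‖u' t‖ ^ 2)) := by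
    intro t ht
    have hP : (1 : ℝ) ≤ 1 + t := by linarith
    have hP0 : (0 : ℝ) < 1 + t := by linarith
    set P : ℝ := 1 + t
    set n : ℝ := ‖u' t‖ with hn
    set a : ℝ := ‖A (u t)‖ with ha
    set cc : ℝ := m (‖B (u t)‖ ^ 2) with hcc
    set ip : ℝ := ⟪A (u t), u' t⟫ with hip
    set sk : ℝ := Real.sqrt k₄ with hsk
    have hn0 : 0 ≤ n := norm_nonneg _
    have ha0 : 0 ≤ a := norm_nonneg _
    have hsk0 : 0 ≤ sk := Real.sqrt_nonneg _
    -- rewrite the sqrt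
    have hsq : Real.sqrt (P ^ 2 * n ^ 2) = P * n := by
      rw [show P ^ 2 * n ^ 2 = (P * n) ^ 2 by ring, Real.sqrt_sq (by positivity)]
    -- bound on ‖A u‖
    have haP : a * P ^ 2 ≤ sk := by
      have h1 : a ^ 2 ≤ k₄ / P ^ 4 := by
        have := hdecay4 t ht
        have hb : 0 ≤ ε * ‖B (u' t)‖ ^ 2 := by positivity
        linarith
      have h2 : (a * P ^ 2) ^ 2 ≤ sk ^ 2 := by
        rw [hsk, Real.sq_sqrt hk₄.le]
        have : a ^ 2 * P ^ 4 ≤ k₄ := by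
          rw [← le_div_iff₀ (by positivity)] at *
          exact h1
        nlinarith
      calc a * P ^ 2 = Real.sqrt ((a * P ^ 2) ^ 2) := (Real.sqrt_sq (by positivity)).symm
        _ ≤ Real.sqrt (sk ^ 2) := Real.sqrt_le_sqrt h2
        _ = sk := Real.sqrt_sq hsk0
    -- inner product identity from the equation
    have h0 : ε * ⟪u'' t, u' t⟫ + (1 / P) * n ^ 2 + cc * ip = 0 := by
      have h := congrArg (fun v => ⟪v, u' t⟫) (heq t ht)
      simpa [inner_add_left, real_inner_smul_left, real_inner_self_eq_norm_sq] using h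
    have hipp : ε * ⟪u'' t, u' t⟫ = -((1 / P) * n ^ 2) - cc * ip := by linarith
    -- bound on the coupling term
    have hcc0 : 0 < cc := lt_of_lt_of_le hμ₁ (hc_lb t ht)
    have hcc2 : cc ≤ μ₂ := hc_ub t ht
    have hipb : -ip ≤ a * n := by
      have := abs_real_inner_le_norm (A (u t)) (u' t)
      have h2 := neg_le_abs ip
      simp only [← hip, ← ha, ← hn] at this
      linarith
    have f1 : cc * (-ip) ≤ μ₂ * (a * n) := by
      calc cc * (-ip) ≤ cc * (a * n) := mul_le_mul_of_nonneg_left hipb hcc0.le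
        _ ≤ μ₂ * (a * n) := mul_le_mul_of_nonneg_right hcc2 (by positivity)
    show 2 * P * n ^ 2 + P ^ 2 * (2 * ⟪u'' t, u' t⟫) ≤
      1 / (ε * P) * (-(P ^ 2 * n ^ 2) + 2 * μ₂ * sk * Real.sqrt (P ^ 2 * n ^ 2))
    rw [hsq, one_div, ← div_eq_inv_mul, le_div_iff₀ (by positivity)]
    -- now goal: (2Pn² + P²·2 ipp) * (ε P) ≤ -(P²n²) + 2 μ₂ sk (P n)
    set ipp : ℝ := ⟪u'' t, u' t⟫ with hIpp
    have key2 : (2 * P * n ^ 2 + P ^ 2 * (2 * ipp)) * (ε * P)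
        = 2 * ε * P ^ 2 * n ^ 2 + 2 * P ^ 3 * (ε * ipp) := by ring
    rw [key2, hipp]
    have hPinv : P * (1 / P) = 1 := mul_one_div_cancel (ne_of_gt hP0)
    have e2 : 2 * P ^ 3 * (-((1 / P) * n ^ 2) - cc * ip)
        = -2 * P ^ 2 * n ^ 2 * (P * (1 / P)) + 2 * P ^ 3 * (cc * (-ip)) := by ring
    rw [e2, hPinv]
    have f1' : 2 * P ^ 3 * (cc * (-ip)) ≤ 2 * P ^ 3 * (μ₂ * (a * n)) :=
      mul_le_mul_of_nonneg_left f1 (by positivity)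
    have f2' : 2 * P ^ 3 * (μ₂ * (a * n)) = 2 * μ₂ * (a * P ^ 2) * (P * n) := by ring
    have f3 : 2 * μ₂ * (a * P ^ 2) * (P * n) ≤ 2 * μ₂ * sk * (P * n) := by
      apply mul_le_mul_of_nonneg_right _ (by positivity)
      have := mul_le_mul_of_nonneg_left haP (by positivity : (0:ℝ) ≤ 2 * μ₂)
      linarith
    have f4 : 2 * ε * P ^ 2 * n ^ 2 + -2 * P ^ 2 * n ^ 2 * 1 ≤ -(P ^ 2 * n ^ 2) := by
      nlinarith [sq_nonneg (P * n)]
    linarith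
  refine ⟨?_, ?_⟩
  · intro t ht d hd
    have := (hd.derivWithin ((uniqueDiffOn_Ici 0) t ht)).symm.trans
      ((hG t ht).derivWithin ((uniqueDiffOn_Ici 0) t ht))
    rw [this]
    exact key t ht
  · -- decay estimate
    set G : ℝ → ℝ := fun s => (1 + s) ^ 2 * ‖u' s‖ ^ 2 with hGdef
    set M : ℝ := max (‖u' 0‖ ^ 2) (4 * μ₂ ^ 2 * k₄) with hM
    have hM4 : 4 * μ₂ ^ 2 * k₄ ≤ M := le_max_right _ _
    have hM0 : G 0 ≤ M := by
      have : G 0 = ‖u' 0‖ ^ 2 := by simp [hGdef]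
      rw [this]; exact le_max_left _ _
    have hGM : ∀ T, 0 ≤ T → G T ≤ M := by
      intro T hT
      have hδ : ∀ δ : ℝ, 0 < δ → G T ≤ M + δ * (1 + T) := by
        intro δ hδ
        have := image_le_of_deriv_right_lt_deriv_boundary'
          (f := G) (f' := D) (a := 0) (b := T)
          (fun x hx => ((hG x hx.1).continuousWithinAt).mono
            (Set.Icc_subset_Ici_self))
          (fun x hx => (hG x hx.1).mono (Set.Ici_subset_Ici.2 hx.1))
          (B := fun x => M + δ * (1 + x)) (B' := fun _ => δ)
          (by simpa using by linarith : G 0 ≤ M + δ * (1 + 0))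
          (Continuous.continuousOn (by continuity))
          (fun x _ => by
            have h1 : HasDerivWithinAt (fun s : ℝ => 1 + s) 1 (Set.Ici x) x :=
              (hasDerivWithinAt_id x _).const_add 1
            simpa using (h1.const_mul δ).const_add M)
          ?_
        · exact this ⟨hT, le_refl T⟩
        · intro x hx hGx
          have hx0 : 0 ≤ x := hx.1
          have hP0 : (0 : ℝ) < 1 + x := by linarith
          have hkx := key x hx0
          have hGx' : G x = M + δ * (1 + x) := hGx
          have hGx4 : 4 * μ₂ ^ 2 * k₄ < G x := by
            rw [hGx']
            nlinarith [mul_nonneg hδ.le hx0]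
          have hGnn : 0 ≤ G x := by positivity
          have hsqle : 2 * μ₂ * Real.sqrt k₄ ≤ Real.sqrt (G x) := by
            calc 2 * μ₂ * Real.sqrt k₄ = Real.sqrt ((2 * μ₂) ^ 2 * k₄) := by
                  rw [Real.sqrt_mul (by positivity), Real.sqrt_sq (by positivity)]
              _ ≤ Real.sqrt (G x) := Real.sqrt_le_sqrt (by nlinarith)
          have hneg : -(G x) + 2 * μ₂ * Real.sqrt k₄ * Real.sqrt (G x) ≤ 0 := by
            have h1 : Real.sqrt (G x) * Real.sqrt (G x) = G x := Real.mul_self_sqrt hGnn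
            have h2 : 2 * μ₂ * Real.sqrt k₄ * Real.sqrt (G x)
                ≤ Real.sqrt (G x) * Real.sqrt (G x) :=
              mul_le_mul_of_nonneg_right hsqle (Real.sqrt_nonneg _)
            linarith
          have : D x ≤ 0 := by
            have h3 : 1 / (ε * (1 + x)) *
                (-((1 + x) ^ 2 * ‖u' x‖ ^ 2) +
                  2 * μ₂ * Real.sqrt k₄ * Real.sqrt ((1 + x) ^ 2 * ‖u' x‖ ^ 2)) ≤ 0 := by
              apply mul_nonpos_of_nonneg_of_nonpos (by positivity)
              exact hneg
            exact le_trans hkx h3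
          linarith
      -- let δ → 0
      apply le_of_forall_pos_le_add
      intro η hη
      have h1T : (0 : ℝ) < 1 + T := by linarith
      have := hδ (η / (1 + T)) (by positivity)
      have : G T ≤ M + (η / (1 + T)) * (1 + T) := this
      rwa [div_mul_cancel₀ _ (ne_of_gt h1T)] at this
    intro t ht
    have h1t : (0 : ℝ) < 1 + t := by linarith
    rw [le_div_iff₀ (by positivity)]
    have := hGM t ht
    calc ‖u' t‖ ^ 2 * (1 + t) ^ 2 = G t := by rw [hGdef]; ring
      _ ≤ M := this
end
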